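/- Let G be a connected graph and H a graph, and let i ≥ 2 be an integer with i ≤ diam(G) − 1. Then any i-packing of G∘H contains at most one vertex from each H-layer H^g = {g}×V(H), and consequently ρ_i(G∘H) ≤ ρ_i(G). -/

import Mathlib

open SimpleGraph

/-- The lexicographic product of simple graphs. -/
def SimpleGraph.lexProd {α β : Type*} (G : SimpleGraph α) (H : SimpleGraph β) :
    SimpleGraph (α × β) where
  Adj x y := G.Adj x.1 y.1 ∨ (x.1 = y.1 ∧ H.Adj x.2 y.2)
  symm := by
    refine ⟨?_⟩
    rintro ⟨g1, h1⟩ ⟨g2, h2⟩ (h | ⟨rfl, h⟩)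
    · exact Or.inl h.symm
    · exact Or.inr ⟨rfl, h.symm⟩
  loopless := by
    refine ⟨?_⟩
    rintro ⟨g, h⟩ (h' | ⟨-, h'⟩)
    · exact G.irrefl h'
    · exact H.irrefl h'

/-- A set of vertices is independent if its vertices are pairwise non-adjacent. -/
def SimpleGraph.IndepSet {α : Type*} (G : SimpleGraph α) (s : Set α) : Prop :=
  ∀ u ∈ s, ∀ v ∈ s, u ≠ v → ¬ G.Adj u v

/-- The independence number: the largest cardinality of an independent set. -/
noncomputable def SimpleGraph.indepNum' {α : Type*} [Fintype α] (G : SimpleGraph α) : ℕ :=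
  sSup {n | ∃ s : Finset α, G.IndepSet ↑s ∧ s.card = n}

/-- An `i`-packing: a set of vertices pairwise at distance greater than `i`. -/
def SimpleGraph.IsPacking {α : Type*} (G : SimpleGraph α) (i : ℕ) (s : Set α) : Prop :=
  ∀ u ∈ s, ∀ v ∈ s, u ≠ v → i < G.dist u v

/-- The `i`-packing number: the largest cardinality of an `i`-packing. -/
noncomputable def SimpleGraph.packingNum {α : Type*} [Fintype α] (G : SimpleGraph α)
    (i : ℕ) : ℕ :=
  sSup {n | ∃ s : Finset α, G.IsPacking i ↑s ∧ s.card = n}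

/-- A `k`-packing coloring: colors in `{1, …, k}`, and any two distinct vertices sharing
color `i` are at distance greater than `i`. -/
def SimpleGraph.IsPackingColoring {α : Type*} (G : SimpleGraph α) (k : ℕ) (c : α → ℕ) :
    Prop :=
  (∀ v, c v ∈ Finset.Icc 1 k) ∧ ∀ u v, u ≠ v → c u = c v → c u < G.dist u v

/-- The packing chromatic number: the least `k` admitting a `k`-packing coloring. -/
noncomputable def SimpleGraph.packingChromatic {α : Type*} (G : SimpleGraph α) : ℕ :=
  sInf {k | ∃ c : α → ℕ, G.IsPackingColoring k c}

/-- `d(G) = 1` if `G` is complete, and `diam(G) - 1` otherwise. -/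
noncomputable def SimpleGraph.dval {α : Type*} [Fintype α] (G : SimpleGraph α) : ℕ :=
  letI := Classical.dec (G = (⊤ : SimpleGraph α))
  if G = (⊤ : SimpleGraph α) then 1 else G.diam - 1

theorem packing_layer_lexProd {α β : Type*} [Fintype α] [Fintype β]
    (G : SimpleGraph α) (H : SimpleGraph β) (hG : G.Connected)
    (i : ℕ) (hi2 : 2 ≤ i) (hid : i ≤ G.diam - 1) :
    (∀ s : Set (α × β), (G.lexProd H).IsPacking i s →
      ∀ g : α, ({v ∈ s | v.1 = g} : Set (α × β)).Subsingleton) ∧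
    (G.lexProd H).packingNum i ≤ G.packingNum i := by
  have hne : Nonempty α := hG.nonempty
  -- G has diameter ≥ 3, hence is nontrivial and every vertex has a neighbor
  have hdiam : 3 ≤ G.diam := by omega
  have hnbr : ∀ g : α, ∃ x, G.Adj g x := by
    intro g
    obtain ⟨u, v, huv⟩ := G.exists_dist_eq_diam
    have hune : u ≠ v := by
      intro h; subst h; simp [SimpleGraph.dist_self] at huv; omega
    have : ∃ w, w ≠ g := by
      by_cases h : u = g
      · exact ⟨v, by rintro rfl; exact hune h⟩
      · exact ⟨u, h⟩
    obtain ⟨w, hw⟩ := this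
    obtain ⟨p⟩ := hG.preconnected g w
    cases p with
    | nil => exact absurd rfl hw.symm
    | cons h q => exact ⟨_, h⟩
  -- distance between two vertices in the same layer is at most 2
  have hlayer : ∀ (g : α) (h1 h2 : β), (G.lexProd H).dist (g, h1) (g, h2) ≤ 2 := by
    intro g h1 h2
    obtain ⟨x, hx⟩ := hnbr g
    have := (G.lexProd H).dist_le
      (Walk.cons (Or.inl hx : (G.lexProd H).Adj (g, h1) (x, h1))
        (Walk.cons (Or.inl hx.symm : (G.lexProd H).Adj (x, h1) (g, h2)) Walk.nil))
    exact this
  -- projection bounds distance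
  have hproj : ∀ (g1 g2 : α) (h1 h2 : β), g1 ≠ g2 →
      (G.lexProd H).dist (g1, h1) (g2, h2) ≤ G.dist g1 g2 := by
    intro g1 g2 h1 h2 hne12
    obtain ⟨p, hp⟩ := (hG.preconnected g1 g2).exists_walk_length_eq_dist
    cases p with
    | nil => exact absurd rfl hne12
    | @cons _ x _ h q =>
      let f : G →g G.lexProd H :=
        ⟨fun v => (v, h2), fun a => Or.inl a⟩
      have := (G.lexProd H).dist_le
        (Walk.cons (Or.inl h : (G.lexProd H).Adj (g1, h1) (x, h2)) (q.map f))
      replace this : (G.lexProd H).dist (g1, h1) (g2, h2) ≤ (q.map f).length + 1 := this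
      rw [Walk.length_map] at this
      have this' : (G.lexProd H).dist (g1, h1) (g2, h2) ≤ q.length + 1 := this
      simp only [Walk.length_cons] at hp
      omega
  have key : ∀ s : Set (α × β), (G.lexProd H).IsPacking i s →
      ∀ g : α, ({v ∈ s | v.1 = g} : Set (α × β)).Subsingleton := by
    intro s hs g u hu v hv
    by_contra hne'
    have hd := hs u hu.1 v hv.1 hne'
    obtain ⟨a, b⟩ := u
    obtain ⟨c, d⟩ := v
    obtain ⟨hu2, rfl⟩ := hu
    obtain ⟨hv2, hg⟩ := hv
    cases hg
    have := hlayer a b d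
    omega
  refine ⟨key, ?_⟩
  classical
  apply csSup_le_csSup
  · exact ⟨Fintype.card α, by rintro n ⟨s, -, rfl⟩; exact s.card_le_univ⟩
  · exact ⟨0, ⟨∅, by simp [SimpleGraph.IsPacking]⟩⟩
  · rintro n ⟨s, hs, rfl⟩
    refine ⟨s.image Prod.fst, ?_, ?_⟩
    · rintro g1 hg1 g2 hg2 hne12
      simp only [Finset.coe_image, Set.mem_image, Finset.mem_coe] at hg1 hg2
      obtain ⟨⟨u1, u2⟩, hu, rfl⟩ := hg1
      obtain ⟨⟨v1, v2⟩, hv, rfl⟩ := hg2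
      have huv : (u1, u2) ≠ (v1, v2) := fun h => hne12 (by rw [h])
      have := hs _ hu _ hv huv
      have h2 := hproj u1 v1 u2 v2 hne12
      show i < G.dist u1 v1
      omega
    · rw [Finset.card_image_of_injOn]
      intro u hu v hv h
      exact key s hs u.1 ⟨hu, rfl⟩ ⟨hv, h.symm⟩
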